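/- In VB_n, for 1 ≤ i ≤ n−1 one has ρ_i λ_{i,i+1} ρ_i = λ_{i+1,i} and ρ_i λ_{i+1,i} ρ_i = λ_{i,i+1}; moreover, for 1 ≤ i < j−1 ≤ n−1 one has ρ_i λ_{ij} ρ_i = λ_{i+1,j} and ρ_i λ_{ji} ρ_i = λ_{j,i+1}. -/
import Mathlib


/-- Generators of the virtual braid group `VB n`:
`Sum.inl i` is the braid generator σ_{i+1} and `Sum.inr i` is the virtual
generator ρ_{i+1} (0-based index `i : Fin (n-1)`, paper indices are 1-based). -/
abbrev VBGen (n : ℕ) := Fin (n - 1) ⊕ Fin (n - 1)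

/-- σ-letter in the free group. -/
def fS {n : ℕ} (i : Fin (n - 1)) : FreeGroup (VBGen n) := FreeGroup.of (Sum.inl i)

/-- ρ-letter in the free group. -/
def fR {n : ℕ} (i : Fin (n - 1)) : FreeGroup (VBGen n) := FreeGroup.of (Sum.inr i)

/-- The defining relators of the virtual braid group `VB_n`. -/
def vbRels (n : ℕ) : Set (FreeGroup (VBGen n)) :=
  {r | (∃ i j : Fin (n - 1), (i : ℕ) + 1 = (j : ℕ) ∧
          r = fS i * fS j * fS i * (fS j * fS i * fS j)⁻¹) ∨
       (∃ i j : Fin (n - 1), (i : ℕ) + 2 ≤ (j : ℕ) ∧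
          r = fS i * fS j * (fS j * fS i)⁻¹) ∨
       (∃ i j : Fin (n - 1), (i : ℕ) + 1 = (j : ℕ) ∧
          r = fR i * fR j * fR i * (fR j * fR i * fR j)⁻¹) ∨
       (∃ i j : Fin (n - 1), (i : ℕ) + 2 ≤ (j : ℕ) ∧
          r = fR i * fR j * (fR j * fR i)⁻¹) ∨
       (∃ i : Fin (n - 1), r = fR i * fR i) ∨
       (∃ i j : Fin (n - 1), ((i : ℕ) + 2 ≤ (j : ℕ) ∨ (j : ℕ) + 2 ≤ (i : ℕ)) ∧
          r = fS i * fR j * (fR j * fS i)⁻¹) ∨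
       (∃ i j : Fin (n - 1), (i : ℕ) + 1 = (j : ℕ) ∧
          r = fR i * fR j * fS i * (fS j * fR i * fR j)⁻¹)}

/-- The virtual braid group `VB_n` as a presented group. -/
abbrev VB (n : ℕ) := PresentedGroup (vbRels n)

/-- The generator σ_i of `VB n`, with the paper's 1-based index `1 ≤ i ≤ n-1`
(junk value `1` outside that range). -/
def sig {n : ℕ} (i : ℕ) : VB n :=
  if h : 1 ≤ i ∧ i ≤ n - 1 then PresentedGroup.of (Sum.inl ⟨i - 1, by omega⟩) else 1

/-- The generator ρ_i of `VB n`, with the paper's 1-based index. -/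
def rho {n : ℕ} (i : ℕ) : VB n :=
  if h : 1 ≤ i ∧ i ≤ n - 1 then PresentedGroup.of (Sum.inr ⟨i - 1, by omega⟩) else 1

/-- The ascending product ρ_a ρ_{a+1} ⋯ ρ_b (equal to `1` if `a > b`). -/
def asc {n : ℕ} (a b : ℕ) : VB n := ((List.range' a (b + 1 - a)).map (rho (n := n))).prod

/-- The descending product ρ_b ρ_{b-1} ⋯ ρ_a (equal to `1` if `a > b`). -/
def desc {n : ℕ} (a b : ℕ) : VB n :=
  (((List.range' a (b + 1 - a)).map (rho (n := n))).reverse).prod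

/-- λ_{k l} for 1-based indices `k ≠ l`:
for `k < l`, λ_{k l} = ρ_{l-1} ⋯ ρ_{k+1} (ρ_k σ_k⁻¹) ρ_{k+1} ⋯ ρ_{l-1};
for `l < k`, λ_{k l} = ρ_{k-1} ⋯ ρ_{l+1} (σ_l⁻¹ ρ_l) ρ_{l+1} ⋯ ρ_{k-1}. -/
def lam {n : ℕ} (k l : ℕ) : VB n :=
  if k < l then desc (k + 1) (l - 1) * (rho k * (sig k)⁻¹) * asc (k + 1) (l - 1)
  else desc (l + 1) (k - 1) * ((sig l)⁻¹ * rho l) * asc (l + 1) (k - 1)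

/-- `ν : VB_n → S_n` is characterized by sending both σ_i and ρ_i to the
transposition (i, i+1). -/
def IsNu {n : ℕ} (ν : VB n →* Equiv.Perm (Fin n)) : Prop :=
  ∀ i : Fin (n - 1),
    ν (PresentedGroup.of (Sum.inl i)) =
      Equiv.swap ⟨(i : ℕ), by have := i.isLt; omega⟩ ⟨(i : ℕ) + 1, by have := i.isLt; omega⟩ ∧
    ν (PresentedGroup.of (Sum.inr i)) =
      Equiv.swap ⟨(i : ℕ), by have := i.isLt; omega⟩ ⟨(i : ℕ) + 1, by have := i.isLt; omega⟩

/-- The subgroup of `VB n` generated by the ρ-generators (a copy of `S_n`). -/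
def Rsub (n : ℕ) : Subgroup (VB n) :=
  Subgroup.closure (Set.range fun i : Fin (n - 1) => (PresentedGroup.of (Sum.inr i) : VB n))

/-- The subgroup of `VB n` generated by the λ_{k l} with `1 ≤ k ≠ l ≤ m`;
for `m = n` this is the virtual pure braid group `VP_n`, and in general it is
the canonical copy of `VP_m` inside `VP_n`. -/
def VPsub (n : ℕ) (m : ℕ) : Subgroup (VB n) :=
  Subgroup.closure {x | ∃ k l : ℕ, 1 ≤ k ∧ k ≤ m ∧ 1 ≤ l ∧ l ≤ m ∧ k ≠ l ∧ x = lam k l}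

/-- `V_i^*`: the normal closure, inside the copy of `VP_{i+1}`, of the subgroup
`V_i = ⟨λ_{k,i+1}, λ_{i+1,k} : 1 ≤ k ≤ i⟩`. -/
def Vstar (n : ℕ) (i : ℕ) : Subgroup (VB n) :=
  Subgroup.closure {x | ∃ g ∈ VPsub n (i + 1), ∃ k : ℕ, 1 ≤ k ∧ k ≤ i ∧
    (x = g⁻¹ * lam k (i + 1) * g ∨ x = g⁻¹ * lam (i + 1) k * g)}


namespace VBAux

variable {n : ℕ}

lemma mk_rel {r : FreeGroup (VBGen n)} (h : r ∈ vbRels n) :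
    PresentedGroup.mk (vbRels n) r = 1 :=
  (QuotientGroup.eq_one_iff r).mpr (Subgroup.subset_normalClosure h)

lemma of_rel {x y : FreeGroup (VBGen n)} (h : x * y⁻¹ ∈ vbRels n) :
    PresentedGroup.mk (vbRels n) x = PresentedGroup.mk (vbRels n) y := by
  have := mk_rel h
  rwa [map_mul, map_inv, mul_inv_eq_one] at this

lemma rho_eq {i : ℕ} (h1 : 1 ≤ i) (h2 : i ≤ n - 1) :
    (rho i : VB n) = PresentedGroup.mk (vbRels n) (fR ⟨i - 1, by omega⟩) := by
  unfold rho
  rw [dif_pos ⟨h1, h2⟩]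
  rfl

lemma sig_eq {i : ℕ} (h1 : 1 ≤ i) (h2 : i ≤ n - 1) :
    (sig i : VB n) = PresentedGroup.mk (vbRels n) (fS ⟨i - 1, by omega⟩) := by
  unfold sig
  rw [dif_pos ⟨h1, h2⟩]
  rfl

lemma rho_mul_self (i : ℕ) : (rho i : VB n) * rho i = 1 := by
  unfold rho
  split
  · rename_i h
    have := mk_rel (n := n) (Or.inr (Or.inr (Or.inr (Or.inr (Or.inl
      ⟨⟨i - 1, by omega⟩, rfl⟩)))))
    rw [map_mul] at this
    exact this
  · simp

lemma rho_inv (i : ℕ) : (rho i : VB n)⁻¹ = rho i :=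
  inv_eq_of_mul_eq_one_right (rho_mul_self i)

lemma rho_rho_comm {i j : ℕ} (h : i + 2 ≤ j) :
    (rho i : VB n) * rho j = rho j * rho i := by
  by_cases hi : 1 ≤ i ∧ i ≤ n - 1
  · by_cases hj : 1 ≤ j ∧ j ≤ n - 1
    · rw [rho_eq hi.1 hi.2, rho_eq hj.1 hj.2, ← map_mul, ← map_mul]
      exact of_rel (Or.inr (Or.inr (Or.inr (Or.inl
        ⟨⟨i - 1, by omega⟩, ⟨j - 1, by omega⟩, by
          show i - 1 + 2 ≤ j - 1; omega, rfl⟩))))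
    · rw [show (rho j : VB n) = 1 from dif_neg hj]; group
  · rw [show (rho i : VB n) = 1 from dif_neg hi]; group

lemma rho_braid {i : ℕ} (h1 : 1 ≤ i) (h2 : i + 1 ≤ n - 1) :
    (rho i : VB n) * rho (i + 1) * rho i = rho (i + 1) * rho i * rho (i + 1) := by
  rw [rho_eq h1 (by omega), rho_eq (by omega : 1 ≤ i + 1) h2, ← map_mul, ← map_mul,
    ← map_mul, ← map_mul]
  exact of_rel (Or.inr (Or.inr (Or.inl
    ⟨⟨i - 1, by omega⟩, ⟨i + 1 - 1, by omega⟩, by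
      show i - 1 + 1 = i + 1 - 1; omega, rfl⟩)))

lemma mixed {i : ℕ} (h1 : 1 ≤ i) (h2 : i + 1 ≤ n - 1) :
    (rho i : VB n) * rho (i + 1) * sig i = sig (i + 1) * rho i * rho (i + 1) := by
  rw [rho_eq h1 (by omega), rho_eq (by omega : 1 ≤ i + 1) h2, sig_eq h1 (by omega),
    sig_eq (by omega : 1 ≤ i + 1) h2, ← map_mul, ← map_mul, ← map_mul, ← map_mul]
  exact of_rel (Or.inr (Or.inr (Or.inr (Or.inr (Or.inr (Or.inr
    ⟨⟨i - 1, by omega⟩, ⟨i + 1 - 1, by omega⟩, by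
      show i - 1 + 1 = i + 1 - 1; omega, rfl⟩))))))

lemma sig_inv_eq {i : ℕ} (h1 : 1 ≤ i) (h2 : i + 1 ≤ n - 1) :
    ((sig i : VB n))⁻¹ = rho (i + 1) * rho i * (sig (i + 1))⁻¹ * rho i * rho (i + 1) := by
  have M := mixed h1 h2
  have hs : (sig i : VB n) = rho (i + 1) * rho i * sig (i + 1) * rho i * rho (i + 1) := by
    have : (rho (i + 1) : VB n)⁻¹ * ((rho i)⁻¹ * (sig (i + 1) * rho i * rho (i + 1))) = sig i := by
      rw [← M]; group
    rw [← this, rho_inv, rho_inv]; group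
  rw [hs]
  simp only [mul_inv_rev, rho_inv]
  group

lemma key1 {i : ℕ} (h1 : 1 ≤ i) (h2 : i + 1 ≤ n - 1) :
    (rho i : VB n) * (rho (i + 1) * (rho i * (sig i)⁻¹) * rho (i + 1)) * rho i
      = rho (i + 1) * (sig (i + 1))⁻¹ := by
  rw [sig_inv_eq h1 h2]
  have B := rho_braid h1 h2
  calc (rho i : VB n) * (rho (i + 1) * (rho i *
        (rho (i + 1) * rho i * (sig (i + 1))⁻¹ * rho i * rho (i + 1))) * rho (i + 1)) * rho i
      = (rho i * rho (i + 1) * rho i) * (rho (i + 1) * rho i) * (sig (i + 1))⁻¹ * rho i *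
        ((rho (i + 1) * rho (i + 1)) * rho i) := by group
    _ = (rho (i + 1) * rho i * rho (i + 1)) * (rho (i + 1) * rho i) * (sig (i + 1))⁻¹ *
        (rho i * rho i) := by rw [B, rho_mul_self (i + 1)]; group
    _ = rho (i + 1) * rho i * (rho (i + 1) * rho (i + 1)) * rho i * (sig (i + 1))⁻¹ := by
        rw [rho_mul_self i]; group
    _ = rho (i + 1) * (rho i * rho i) * (sig (i + 1))⁻¹ := by rw [rho_mul_self (i + 1)]; group
    _ = rho (i + 1) * (sig (i + 1))⁻¹ := by rw [rho_mul_self i]; group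

lemma key2 {i : ℕ} (h1 : 1 ≤ i) (h2 : i + 1 ≤ n - 1) :
    (rho i : VB n) * (rho (i + 1) * ((sig i)⁻¹ * rho i) * rho (i + 1)) * rho i
      = (sig (i + 1))⁻¹ * rho (i + 1) := by
  rw [sig_inv_eq h1 h2]
  have B := rho_braid h1 h2
  calc (rho i : VB n) * (rho (i + 1) *
        ((rho (i + 1) * rho i * (sig (i + 1))⁻¹ * rho i * rho (i + 1)) * rho i) * rho (i + 1)) * rho i
      = rho i * (rho (i + 1) * rho (i + 1)) * rho i * (sig (i + 1))⁻¹ *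
        (rho i * rho (i + 1) * rho i) * (rho (i + 1) * rho i) := by group
    _ = (rho i * rho i) * (sig (i + 1))⁻¹ * (rho (i + 1) * rho i * rho (i + 1)) *
        (rho (i + 1) * rho i) := by rw [rho_mul_self (i + 1), B]; group
    _ = (sig (i + 1))⁻¹ * rho (i + 1) * rho i * (rho (i + 1) * rho (i + 1)) * rho i := by
        rw [rho_mul_self i]; group
    _ = (sig (i + 1))⁻¹ * rho (i + 1) * (rho i * rho i) := by rw [rho_mul_self (i + 1)]; group
    _ = (sig (i + 1))⁻¹ * rho (i + 1) := by rw [rho_mul_self i]; group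

lemma rho_comm_prod (i : ℕ) (L : List ℕ) (h : ∀ k ∈ L, i + 2 ≤ k) :
    (rho (n := n) i) * (L.map (rho (n := n))).prod = (L.map (rho (n := n))).prod * rho i := by
  induction L with
  | nil => simp
  | cons a L ih =>
    simp only [List.map_cons, List.prod_cons]
    rw [← mul_assoc, rho_rho_comm (h a (by simp)), mul_assoc,
      ih (fun k hk => h k (List.mem_cons_of_mem a hk)), ← mul_assoc]

lemma rho_comm_asc {i a : ℕ} (b : ℕ) (h : i + 2 ≤ a) :
    (rho i : VB n) * asc a b = asc a b * rho i := by
  unfold asc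
  exact rho_comm_prod i _ (fun k hk => le_trans h (List.mem_range'_1.mp hk).1)

lemma rho_comm_desc {i a : ℕ} (b : ℕ) (h : i + 2 ≤ a) :
    (rho i : VB n) * desc a b = desc a b * rho i := by
  unfold desc
  rw [← List.map_reverse]
  exact rho_comm_prod i _ (fun k hk =>
    le_trans h (List.mem_range'_1.mp (List.mem_reverse.mp hk)).1)

lemma asc_empty {a b : ℕ} (h : b < a) : (asc a b : VB n) = 1 := by
  unfold asc
  rw [show b + 1 - a = 0 by omega]
  simp

lemma desc_empty {a b : ℕ} (h : b < a) : (desc a b : VB n) = 1 := by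
  unfold desc
  rw [show b + 1 - a = 0 by omega]
  simp

lemma asc_split {a b : ℕ} (h : a ≤ b) : (asc a b : VB n) = rho a * asc (a + 1) b := by
  unfold asc
  rw [show b + 1 - a = (b + 1 - (a + 1)) + 1 by omega, List.range'_succ]
  simp

lemma desc_split {a b : ℕ} (h : a ≤ b) : (desc a b : VB n) = desc (a + 1) b * rho a := by
  unfold desc
  rw [show b + 1 - a = (b + 1 - (a + 1)) + 1 by omega, List.range'_succ]
  simp

lemma lam_lt {k l : ℕ} (h : k < l) :
    (lam k l : VB n) = desc (k + 1) (l - 1) * (rho k * (sig k)⁻¹) * asc (k + 1) (l - 1) := by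
  unfold lam
  rw [if_pos h]

lemma lam_gt {k l : ℕ} (h : l < k) :
    (lam k l : VB n) = desc (l + 1) (k - 1) * ((sig l)⁻¹ * rho l) * asc (l + 1) (k - 1) := by
  unfold lam
  rw [if_neg (by omega)]

end VBAux

open VBAux in
/-- in VB_n, ρ_i λ_{i,i+1} ρ_i = λ_{i+1,i} and
ρ_i λ_{i+1,i} ρ_i = λ_{i,i+1} for 1 ≤ i ≤ n-1, and for i+1 < j ≤ n,
ρ_i λ_{ij} ρ_i = λ_{i+1,j} and ρ_i λ_{ji} ρ_i = λ_{j,i+1}. -/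
theorem stmt_4 (n : ℕ) (hn : 2 ≤ n) :
    (∀ i : ℕ, 1 ≤ i → i ≤ n - 1 →
      (rho i * lam i (i + 1) * rho i : VB n) = lam (i + 1) i ∧
      (rho i * lam (i + 1) i * rho i : VB n) = lam i (i + 1)) ∧
    (∀ i j : ℕ, 1 ≤ i → i + 1 < j → j ≤ n →
      (rho i * lam i j * rho i : VB n) = lam (i + 1) j ∧
      (rho i * lam j i * rho i : VB n) = lam j (i + 1)) := by
  constructor
  · intro i hi1 hi2
    have e1 : (lam i (i + 1) : VB n) = rho i * (sig i)⁻¹ := by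
      rw [lam_lt (by omega), desc_empty (by omega), asc_empty (by omega)]
      group
    have e2 : (lam (i + 1) i : VB n) = (sig i)⁻¹ * rho i := by
      rw [lam_gt (by omega), desc_empty (by omega), asc_empty (by omega)]
      group
    rw [e1, e2]
    constructor
    · calc rho i * (rho i * (sig i)⁻¹) * rho i
          = (rho i * rho i) * ((sig i)⁻¹ * rho i) := by group
        _ = (sig i)⁻¹ * rho i := by rw [rho_mul_self i]; group
    · calc rho i * ((sig i)⁻¹ * rho i) * rho i
          = rho i * (sig i)⁻¹ * (rho i * rho i) := by group
        _ = rho i * (sig i)⁻¹ := by rw [rho_mul_self i]; group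
  · intro i j hi1 hij hj
    have hsplit : i + 1 ≤ j - 1 := by omega
    have h2 : i + 1 ≤ n - 1 := by omega
    have cd := rho_comm_desc (n := n) (i := i) (a := i + 1 + 1) (j - 1) (by omega)
    have ca := rho_comm_asc (n := n) (i := i) (a := i + 1 + 1) (j - 1) (by omega)
    constructor
    · rw [lam_lt (by omega : i < j), lam_lt (by omega : i + 1 < j),
        desc_split hsplit, asc_split hsplit]
      calc rho i * (desc (i + 1 + 1) (j - 1) * rho (i + 1) * (rho i * (sig i)⁻¹) *
              (rho (i + 1) * asc (i + 1 + 1) (j - 1))) * rho i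
          = (rho i * desc (i + 1 + 1) (j - 1)) *
              (rho (i + 1) * (rho i * (sig i)⁻¹) * rho (i + 1)) *
              (asc (i + 1 + 1) (j - 1) * rho i) := by group
        _ = (desc (i + 1 + 1) (j - 1) * rho i) *
              (rho (i + 1) * (rho i * (sig i)⁻¹) * rho (i + 1)) *
              (rho i * asc (i + 1 + 1) (j - 1)) := by rw [cd, ← ca]
        _ = desc (i + 1 + 1) (j - 1) *
              (rho i * (rho (i + 1) * (rho i * (sig i)⁻¹) * rho (i + 1)) * rho i) *
              asc (i + 1 + 1) (j - 1) := by group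
        _ = desc (i + 1 + 1) (j - 1) * (rho (i + 1) * (sig (i + 1))⁻¹) *
              asc (i + 1 + 1) (j - 1) := by rw [key1 hi1 h2]
    · rw [lam_gt (by omega : i < j), lam_gt (by omega : i + 1 < j),
        desc_split hsplit, asc_split hsplit]
      calc rho i * (desc (i + 1 + 1) (j - 1) * rho (i + 1) * ((sig i)⁻¹ * rho i) *
              (rho (i + 1) * asc (i + 1 + 1) (j - 1))) * rho i
          = (rho i * desc (i + 1 + 1) (j - 1)) *
              (rho (i + 1) * ((sig i)⁻¹ * rho i) * rho (i + 1)) *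
              (asc (i + 1 + 1) (j - 1) * rho i) := by group
        _ = (desc (i + 1 + 1) (j - 1) * rho i) *
              (rho (i + 1) * ((sig i)⁻¹ * rho i) * rho (i + 1)) *
              (rho i * asc (i + 1 + 1) (j - 1)) := by rw [cd, ← ca]
        _ = desc (i + 1 + 1) (j - 1) *
              (rho i * (rho (i + 1) * ((sig i)⁻¹ * rho i) * rho (i + 1)) * rho i) *
              asc (i + 1 + 1) (j - 1) := by group
        _ = desc (i + 1 + 1) (j - 1) * ((sig (i + 1))⁻¹ * rho (i + 1)) *
              asc (i + 1 + 1) (j - 1) := by rw [key2 hi1 h2]
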